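/- Under the linear model y = Xβ* + ε with ε ~ N(0, σ²I_n) and X of full column rank, if every nonzero coordinate of β* satisfies |β_j*| > (4σ/√λ)·√(log(p)/n^α) for some 0 < λ ≤ λ_min((1/n)XᵀX) and some α ∈ (0,1], then with probability at least 1 − 2p^{1−2n^{1−α}}, the set of indices of the k* largest values of |β̂_j| (where β̂ = (XᵀX)^{-1}Xᵀy is the least squares estimate) is exactly the support S_{β*} = {j : β_j* ≠ 0}, with k* = |S_{β*}|. -/

import Mathlib

open MeasureTheory ProbabilityTheory Matrix Finset

open scoped NNReal ENNReal

section OLSHelpers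

open Real

lemma my_integral_exp_quad {a : ℝ} (ha : 0 < a) (b : ℝ) :
    ∫ x : ℝ, Real.exp (-a * x ^ 2 + b * x)
      = Real.sqrt (π / a) * Real.exp (b ^ 2 / (4 * a)) := by
  have h : ∀ x : ℝ, -a * x ^ 2 + b * x
      = -a * (x + -b / (2 * a)) ^ 2 + b ^ 2 / (4 * a) := by
    intro x; field_simp; ring
  simp_rw [h, Real.exp_add, integral_mul_const]
  rw [integral_add_right_eq_self (fun x => Real.exp (-a * x ^ 2)) (-b / (2 * a)),
    integral_gaussian]

lemma my_integrable_exp_quad {a : ℝ} (ha : 0 < a) (b : ℝ) :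
    Integrable (fun x : ℝ => Real.exp (-a * x ^ 2 + b * x)) := by
  have := (integrable_cexp_quadratic (b := (a : ℂ)) (by simpa using ha) (b : ℂ) 0).norm
  convert this using 2 with x
  rw [Complex.norm_exp]
  congr 1
  have : (-(a:ℂ) * (x:ℂ) ^ 2 + (b:ℂ) * (x:ℂ) + 0) = ((-a * x ^ 2 + b * x : ℝ) : ℂ) := by
    push_cast; ring
  rw [this, Complex.ofReal_re]

lemma my_pdf_mul {v : ℝ≥0} (hv : 0 < (v : ℝ)) (t x : ℝ) :
    gaussianPDFReal 0 v x * Real.exp (t * x)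
      = (Real.sqrt (2 * π * v))⁻¹ * Real.exp (-(2 * (v:ℝ))⁻¹ * x ^ 2 + t * x) := by
  rw [gaussianPDFReal, mul_assoc, ← Real.exp_add, sub_zero]
  have hx : -x ^ 2 / (2 * (v:ℝ)) + t * x = -(2 * (v:ℝ))⁻¹ * x ^ 2 + t * x := by
    rw [div_eq_mul_inv]; ring
  rw [hx]

lemma my_integrable_exp_gaussian (v : ℝ≥0) (hv : v ≠ 0) (t : ℝ) :
    Integrable (fun x => Real.exp (t * x)) (gaussianReal 0 v) := by
  have hv' : 0 < (v : ℝ) := by positivity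
  rw [gaussianReal_of_var_ne_zero 0 hv]
  have hd : (gaussianPDF 0 v) = fun x =>
      ((Real.toNNReal (gaussianPDFReal 0 v x) : ℝ≥0) : ℝ≥0∞) := rfl
  rw [hd, integrable_withDensity_iff_integrable_smul
    (measurable_gaussianPDFReal 0 v).real_toNNReal]
  have ha : 0 < (2 * (v:ℝ))⁻¹ := by positivity
  have := (my_integrable_exp_quad ha t).const_mul (Real.sqrt (2 * π * v))⁻¹
  refine this.congr (ae_of_all _ fun x => ?_)
  simp only [NNReal.smul_def, smul_eq_mul]
  rw [Real.coe_toNNReal _ (gaussianPDFReal_nonneg 0 v x), my_pdf_mul hv']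

lemma my_integral_exp_gaussian (v : ℝ≥0) (hv : v ≠ 0) (t : ℝ) :
    ∫ x, Real.exp (t * x) ∂(gaussianReal 0 v) = Real.exp ((v : ℝ) * t ^ 2 / 2) := by
  have hv' : 0 < (v : ℝ) := by positivity
  rw [gaussianReal_of_var_ne_zero 0 hv]
  have hd : (gaussianPDF 0 v) = fun x =>
      ((Real.toNNReal (gaussianPDFReal 0 v x) : ℝ≥0) : ℝ≥0∞) := rfl
  rw [hd, integral_withDensity_eq_integral_smul
    (measurable_gaussianPDFReal 0 v).real_toNNReal]
  have ha : 0 < (2 * (v:ℝ))⁻¹ := by positivity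
  calc ∫ x, (Real.toNNReal (gaussianPDFReal 0 v x)) • Real.exp (t * x)
      = ∫ x, (Real.sqrt (2 * π * v))⁻¹ * Real.exp (-(2 * (v:ℝ))⁻¹ * x ^ 2 + t * x) := by
        refine integral_congr_ae (ae_of_all _ fun x => ?_)
        simp only [NNReal.smul_def, smul_eq_mul]
        rw [Real.coe_toNNReal _ (gaussianPDFReal_nonneg 0 v x), my_pdf_mul hv']
    _ = (Real.sqrt (2 * π * v))⁻¹ *
          (Real.sqrt (π / (2 * (v:ℝ))⁻¹) * Real.exp (t ^ 2 / (4 * (2 * (v:ℝ))⁻¹))) := by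
        rw [integral_const_mul, my_integral_exp_quad ha]
    _ = Real.exp ((v : ℝ) * t ^ 2 / 2) := by
        have h1 : π / (2 * (v:ℝ))⁻¹ = 2 * π * v := by field_simp
        have h2 : t ^ 2 / (4 * (2 * (v:ℝ))⁻¹) = (v:ℝ) * t ^ 2 / 2 := by field_simp; ring
        rw [h1, h2, ← mul_assoc, inv_mul_cancel₀ (by positivity), one_mul]

variable {Ω : Type*} [MeasurableSpace Ω]

lemma my_int_coord (μ : Measure Ω) (Z : Ω → ℝ)
    (hZ : Measurable Z) (v : ℝ≥0) (hv : v ≠ 0)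
    (hmap : Measure.map Z μ = gaussianReal 0 v) (c s : ℝ) :
    Integrable (fun ω => Real.exp (s * (c * Z ω))) μ := by
  have hmeas : AEStronglyMeasurable (fun x => Real.exp ((s * c) * x)) (Measure.map Z μ) :=
    ((measurable_const_mul _).exp).aestronglyMeasurable
  have h1 : Integrable (fun x => Real.exp ((s * c) * x)) (Measure.map Z μ) := by
    rw [hmap]; exact my_integrable_exp_gaussian v hv _
  have := (integrable_map_measure hmeas hZ.aemeasurable).mp h1
  refine this.congr (ae_of_all _ fun ω => ?_)
  simp [Function.comp, mul_assoc]

lemma my_mgf_coord (μ : Measure Ω) (Z : Ω → ℝ)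
    (hZ : Measurable Z) (v : ℝ≥0) (hv : v ≠ 0)
    (hmap : Measure.map Z μ = gaussianReal 0 v) (c s : ℝ) :
    mgf (fun ω => c * Z ω) μ s = Real.exp ((v : ℝ) * (s * c) ^ 2 / 2) := by
  have hmeas : AEStronglyMeasurable (fun x => Real.exp ((s * c) * x)) (Measure.map Z μ) :=
    ((measurable_const_mul _).exp).aestronglyMeasurable
  have : mgf (fun ω => c * Z ω) μ s = ∫ ω, Real.exp ((s * c) * Z ω) ∂μ := by
    rw [mgf]
    exact integral_congr_ae (ae_of_all _ fun ω => by simp [mul_assoc])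
  rw [this, ← integral_map hZ.aemeasurable hmeas, hmap, my_integral_exp_gaussian v hv]

lemma my_Z_int (μ : Measure Ω) [IsProbabilityMeasure μ] (n : ℕ) (c : Fin n → ℝ)
    (e : Fin n → Ω → ℝ) (hmeas : ∀ i, Measurable (e i))
    (hindep : iIndepFun e μ)
    (v : ℝ≥0) (hv : v ≠ 0) (hgauss : ∀ i, Measure.map (e i) μ = gaussianReal 0 v)
    (s : ℝ) :
    Integrable (fun ω => Real.exp (s * ∑ i, c i * e i ω)) μ := by
  have hW : iIndepFun (fun i (ω : Ω) => c i * e i ω) μ :=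
    hindep.comp (fun i x => c i * x) (fun i => measurable_const_mul _)
  have hWmeas : ∀ i, Measurable (fun ω => c i * e i ω) :=
    fun i => (hmeas i).const_mul _
  have h := iIndepFun.integrable_exp_mul_sum (t := s) hW hWmeas
    (s := Finset.univ)
    (fun i _ => my_int_coord μ (e i) (hmeas i) v hv (hgauss i) (c i) s)
  refine h.congr (ae_of_all _ fun ω => ?_)
  simp [Finset.sum_apply]

lemma my_Z_mgf (μ : Measure Ω) [IsProbabilityMeasure μ] (n : ℕ) (c : Fin n → ℝ)
    (e : Fin n → Ω → ℝ) (hmeas : ∀ i, Measurable (e i))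
    (hindep : iIndepFun e μ)
    (v : ℝ≥0) (hv : v ≠ 0) (hgauss : ∀ i, Measure.map (e i) μ = gaussianReal 0 v)
    (s : ℝ) :
    mgf (fun ω => ∑ i, c i * e i ω) μ s
      = Real.exp ((v : ℝ) * (∑ i, (c i) ^ 2) * s ^ 2 / 2) := by
  have hW : iIndepFun (fun i (ω : Ω) => c i * e i ω) μ :=
    hindep.comp (fun i x => c i * x) (fun i => measurable_const_mul _)
  have hWmeas : ∀ i, Measurable (fun ω => c i * e i ω) :=
    fun i => (hmeas i).const_mul _
  have hsum_eq : (fun ω => ∑ i, c i * e i ω)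
      = ∑ i : Fin n, (fun ω => c i * e i ω) := by
    funext ω; simp [Finset.sum_apply]
  rw [hsum_eq, iIndepFun.mgf_sum hW hWmeas Finset.univ]
  have hterm : ∀ i : Fin n, mgf (fun ω => c i * e i ω) μ s
      = Real.exp ((v : ℝ) * (s * c i) ^ 2 / 2) :=
    fun i => my_mgf_coord μ (e i) (hmeas i) v hv (hgauss i) (c i) s
  simp_rw [hterm]
  rw [← Real.exp_sum]
  congr 1
  have : ∀ i : Fin n, (v : ℝ) * (s * c i) ^ 2 / 2 = ((v : ℝ) * s ^ 2 / 2) * (c i) ^ 2 :=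
    fun i => by ring
  simp_rw [this, ← Finset.mul_sum]
  ring

lemma my_tail (μ : Measure Ω) [IsProbabilityMeasure μ]
    (Z : Ω → ℝ) (K : ℝ) (hK : 0 < K)
    (hint : ∀ s : ℝ, Integrable (fun ω => Real.exp (s * Z ω)) μ)
    (hmgf : ∀ s : ℝ, mgf Z μ s = Real.exp (K * s ^ 2 / 2))
    (t : ℝ) (ht : 0 ≤ t) :
    μ {ω | t ≤ Z ω} ≤ ENNReal.ofReal (Real.exp (-(t ^ 2 / (2 * K)))) ∧
    μ {ω | Z ω ≤ -t} ≤ ENNReal.ofReal (Real.exp (-(t ^ 2 / (2 * K)))) := by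
  have key : Real.exp (-(t / K) * t) * Real.exp (K * (t / K) ^ 2 / 2)
      = Real.exp (-(t ^ 2 / (2 * K))) := by
    rw [← Real.exp_add]
    congr 1
    field_simp
    ring
  constructor
  · have h := measure_ge_le_exp_mul_mgf (X := Z) (μ := μ) (t := t / K) t
      (by positivity) (hint _)
    rw [hmgf, key] at h
    calc μ {ω | t ≤ Z ω} = ENNReal.ofReal (μ {ω | t ≤ Z ω}).toReal :=
          (ENNReal.ofReal_toReal (measure_ne_top _ _)).symm
      _ ≤ _ := ENNReal.ofReal_le_ofReal h
  · have h := measure_le_le_exp_mul_mgf (X := Z) (μ := μ) (t := -(t / K)) (-t)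
      (by simp; positivity) (hint _)
    rw [hmgf] at h
    have key2 : Real.exp (-(-(t / K)) * -t) * Real.exp (K * (-(t / K)) ^ 2 / 2)
        = Real.exp (-(t ^ 2 / (2 * K))) := by
      rw [← Real.exp_add]
      congr 1
      field_simp
      ring
    rw [key2] at h
    calc μ {ω | Z ω ≤ -t} = ENNReal.ofReal (μ {ω | Z ω ≤ -t}).toReal :=
          (ENNReal.ofReal_toReal (measure_ne_top _ _)).symm
      _ ≤ _ := ENNReal.ofReal_le_ofReal h

lemma my_AAT {n p : ℕ} (X : Matrix (Fin n) (Fin p) ℝ) (hrank : IsUnit (Xᵀ * X)) :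
    ((Xᵀ * X)⁻¹ * Xᵀ) * ((Xᵀ * X)⁻¹ * Xᵀ)ᵀ = (Xᵀ * X)⁻¹ := by
  have hdet := (Matrix.isUnit_iff_isUnit_det _).mp hrank
  have hsymm : ((Xᵀ * X)⁻¹)ᵀ = (Xᵀ * X)⁻¹ := by
    rw [Matrix.transpose_nonsing_inv, Matrix.transpose_mul, Matrix.transpose_transpose]
  rw [Matrix.transpose_mul, hsymm, Matrix.transpose_transpose]
  rw [Matrix.mul_assoc, ← Matrix.mul_assoc Xᵀ X _, Matrix.mul_nonsing_inv _ hdet,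
    Matrix.mul_one]

lemma my_beta {n p : ℕ} (X : Matrix (Fin n) (Fin p) ℝ) (hrank : IsUnit (Xᵀ * X))
    (β : Fin p → ℝ) (ε : Fin n → ℝ) :
    (Xᵀ * X)⁻¹ *ᵥ (Xᵀ *ᵥ (X *ᵥ β + ε)) = β + ((Xᵀ * X)⁻¹ * Xᵀ) *ᵥ ε := by
  have hdet := (Matrix.isUnit_iff_isUnit_det _).mp hrank
  rw [Matrix.mulVec_add, Matrix.mulVec_add, Matrix.mulVec_mulVec, Matrix.mulVec_mulVec,
    Matrix.mul_assoc, Matrix.nonsing_inv_mul _ hdet, Matrix.one_mulVec,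
    Matrix.mulVec_mulVec]

lemma my_var_bound {n p : ℕ} (hn : 0 < n) (X : Matrix (Fin n) (Fin p) ℝ)
    (hrank : IsUnit (Xᵀ * X)) (lam : ℝ) (hlam0 : 0 < lam)
    (hlam : ∀ v : Fin p → ℝ,
      lam * ∑ i, (v i) ^ 2 ≤ v ⬝ᵥ (((1 / (n : ℝ)) • (Xᵀ * X)) *ᵥ v)) (j : Fin p) :
    0 < (Xᵀ * X)⁻¹ j j ∧ (Xᵀ * X)⁻¹ j j ≤ 1 / (n * lam) := by
  have hn' : (0:ℝ) < n := by exact_mod_cast hn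
  set B := (Xᵀ * X)⁻¹ with hB
  have hdet := (Matrix.isUnit_iff_isUnit_det _).mp hrank
  set w : Fin p → ℝ := fun l => B l j with hw
  have hBv : (Xᵀ * X) *ᵥ w = fun i => (1 : Matrix (Fin p) (Fin p) ℝ) i j := by
    funext i
    have h0 : ((Xᵀ * X) * B) i j = (1 : Matrix (Fin p) (Fin p) ℝ) i j := by
      rw [hB, Matrix.mul_nonsing_inv _ hdet]
    rw [← h0]
    simp [Matrix.mulVec, Matrix.mul_apply, dotProduct, hw]
  have hq : w ⬝ᵥ (((1 / (n:ℝ)) • (Xᵀ * X)) *ᵥ w) = (1 / (n:ℝ)) * B j j := by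
    rw [Matrix.smul_mulVec, dotProduct_smul, hBv, smul_eq_mul]
    congr 1
    simp [dotProduct, Matrix.one_apply, hw]
  have h1 := hlam w
  rw [hq] at h1
  have hsum_pos : 0 < ∑ l, w l ^ 2 := by
    rcases lt_or_eq_of_le (Finset.sum_nonneg fun l _ => sq_nonneg (w l)) with h | h
    · exact h
    · exfalso
      have hw0 : ∀ l, w l = 0 := by
        intro l
        have := (Finset.sum_eq_zero_iff_of_nonneg (fun l _ => sq_nonneg (w l))).mp h.symm l
          (Finset.mem_univ l)
        exact pow_eq_zero_iff (two_ne_zero) |>.mp this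
      have h2 : ((Xᵀ * X) * B) j j = 1 := by
        rw [hB, Matrix.mul_nonsing_inv _ hdet, Matrix.one_apply_eq]
      rw [Matrix.mul_apply] at h2
      have : ∀ l, (Xᵀ * X) j l * B l j = 0 := fun l => by
        have := hw0 l; rw [hw] at this; simp only at this; rw [this, mul_zero]
      simp only [this, Finset.sum_const_zero] at h2
      exact zero_ne_one h2
  have hpos : 0 < 1 / (n:ℝ) * B j j := lt_of_lt_of_le (mul_pos hlam0 hsum_pos) h1
  have hBjj_pos : 0 < B j j := by
    rcases mul_pos_iff.mp hpos with ⟨_, h'⟩ | ⟨h', _⟩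
    · exact h'
    · exfalso; have : 0 < 1 / (n:ℝ) := by positivity
      linarith
  refine ⟨hBjj_pos, ?_⟩
  have hsq : w j ^ 2 ≤ ∑ l, w l ^ 2 :=
    Finset.single_le_sum (fun l _ => sq_nonneg (w l)) (Finset.mem_univ j)
  have hwj : w j = B j j := rfl
  rw [hwj] at hsq
  have h3 : lam * (B j j) ^ 2 ≤ (1 / (n:ℝ)) * B j j := by nlinarith
  have h4 : (n:ℝ) * (lam * B j j ^ 2) ≤ (n:ℝ) * (1 / (n:ℝ) * B j j) :=
    mul_le_mul_of_nonneg_left h3 hn'.le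
  have h5 : (n:ℝ) * (1 / (n:ℝ) * B j j) = B j j := by field_simp
  rw [h5] at h4
  rw [le_div_iff₀ (by positivity)]
  nlinarith [h4, hBjj_pos]

end OLSHelpers

/-- OLS with thresholding recovers the true support with high
probability (Proposition 2 of the paper).  The event that "the indices of the
k* largest |β̂_j| are exactly the support of β*" is formalized as: every
coordinate of β̂ on the support strictly dominates every coordinate off the
support in absolute value. -/
theorem olsth_true_feature_recovery
    {Ω : Type*} [MeasurableSpace Ω] (μ : Measure Ω) [IsProbabilityMeasure μ]
    (n p : ℕ) (hn : 0 < n) (hp : 0 < p)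
    (σ : ℝ) (hσ : 0 < σ)
    (X : Matrix (Fin n) (Fin p) ℝ)
    (hrank : IsUnit (Xᵀ * X))
    (βstar : Fin p → ℝ)
    (e : Fin n → Ω → ℝ)
    (hmeas : ∀ i, Measurable (e i))
    (hindep : iIndepFun e μ)
    (hgauss : ∀ i, Measure.map (e i) μ = gaussianReal 0 ⟨σ ^ 2, by positivity⟩)
    (y : Ω → Fin n → ℝ)
    (hy : ∀ ω, y ω = X *ᵥ βstar + fun i => e i ω)
    (βhat : Ω → Fin p → ℝ)
    (hβhat : ∀ ω, βhat ω = (Xᵀ * X)⁻¹ *ᵥ (Xᵀ *ᵥ y ω))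
    (α : ℝ) (hα0 : 0 < α) (hα1 : α ≤ 1)
    (lam : ℝ) (hlam0 : 0 < lam)
    (hlam : ∀ v : Fin p → ℝ,
      lam * ∑ i, (v i) ^ 2 ≤ v ⬝ᵥ (((1 / (n : ℝ)) • (Xᵀ * X)) *ᵥ v))
    (hbeta : ∀ j, βstar j ≠ 0 →
      (4 * σ / Real.sqrt lam) * Real.sqrt (Real.log p / (n : ℝ) ^ α) < |βstar j|) :
    1 - ENNReal.ofReal (2 * (p : ℝ) ^ (1 - 2 * (n : ℝ) ^ (1 - α)))
      ≤ μ {ω | ∀ j, βstar j ≠ 0 → ∀ l, βstar l = 0 → |βhat ω l| < |βhat ω j|} := by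
  classical
  have hn' : (0:ℝ) < n := by exact_mod_cast hn
  have hp' : (0:ℝ) < p := by exact_mod_cast hp
  -- trivial case p = 1
  by_cases hp1 : p = 1
  · subst hp1
    have h2 : (2 : ℝ) * (1:ℝ) ^ ((1:ℝ) - 2 * (n : ℝ) ^ ((1:ℝ) - α)) = 2 := by
      rw [Real.one_rpow, mul_one]
    have : (1:ℝ≥0∞) - ENNReal.ofReal (2 * ((1:ℕ) : ℝ) ^ (1 - 2 * (n : ℝ) ^ (1 - α))) = 0 := by
      rw [tsub_eq_zero_iff_le]
      rw [Nat.cast_one, h2]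
      rw [show ((1:ℝ≥0∞)) = ENNReal.ofReal 1 by simp]
      exact ENNReal.ofReal_le_ofReal (by norm_num)
    rw [this]
    exact zero_le
  have hp2 : (1:ℝ) < p := by
    have : 2 ≤ p := by omega
    exact_mod_cast Nat.lt_of_lt_of_le Nat.one_lt_two this |>.le.lt_of_ne (by exact_mod_cast (by omega : (1:ℕ) ≠ p))
  have hlogp : 0 < Real.log p := Real.log_pos hp2
  -- variance
  set v : ℝ≥0 := ⟨σ ^ 2, by positivity⟩ with hvdef
  have hv : v ≠ 0 := by
    intro h
    have : σ ^ 2 = 0 := congrArg NNReal.toReal h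
    nlinarith
  have hgauss' : ∀ i, Measure.map (e i) μ = gaussianReal 0 v := hgauss
  -- design quantities
  set A : Matrix (Fin p) (Fin n) ℝ := (Xᵀ * X)⁻¹ * Xᵀ with hA
  set Z : Fin p → Ω → ℝ := fun j ω => ∑ i, A j i * e i ω with hZdef
  have hZmeas : ∀ j, Measurable (Z j) := by
    intro j
    rw [hZdef]
    exact Finset.measurable_sum Finset.univ fun i _ => (hmeas i).const_mul _
  have hβZ : ∀ ω j, βhat ω j = βstar j + Z j ω := by
    intro ω j
    have h := my_beta X hrank βstar (fun i => e i ω)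
    rw [hβhat ω, hy ω, h]
    simp [Matrix.mulVec, dotProduct, hZdef, hA]
  -- diagonal entries
  set c : Fin p → ℝ := fun j => ∑ i, (A j i) ^ 2 with hc
  have hcB : ∀ j, c j = (Xᵀ * X)⁻¹ j j := by
    intro j
    have h := my_AAT X hrank
    have h2 : (((Xᵀ * X)⁻¹ * Xᵀ) * ((Xᵀ * X)⁻¹ * Xᵀ)ᵀ) j j = (Xᵀ * X)⁻¹ j j := by rw [h]
    rw [← h2]
    simp only [Matrix.mul_apply, Matrix.transpose_apply, hc, hA, sq]
  have hvb : ∀ j, 0 < c j ∧ c j ≤ 1 / (n * lam) := by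
    intro j
    rw [hcB j]
    exact my_var_bound hn X hrank lam hlam0 hlam j
  -- threshold
  set t : ℝ := 2 * σ / Real.sqrt lam * Real.sqrt (Real.log p / (n:ℝ) ^ α) with htdef
  have hq0 : 0 ≤ Real.log p / (n:ℝ) ^ α := by positivity
  have ht0 : 0 ≤ t := by positivity
  have ht2 : t ^ 2 = 4 * σ ^ 2 / lam * (Real.log p / (n:ℝ) ^ α) := by
    rw [htdef, mul_pow, div_pow, Real.sq_sqrt hq0, Real.sq_sqrt hlam0.le]
    ring
  have hnr : (n:ℝ) ^ ((1:ℝ) - α) = (n:ℝ) / (n:ℝ) ^ α := by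
    rw [Real.rpow_sub hn', Real.rpow_one]
  have hna : (0:ℝ) < (n:ℝ) ^ α := Real.rpow_pos_of_pos hn' α
  -- per-coordinate tail bound
  set R : ℝ := (p:ℝ) ^ (-(2 * (n:ℝ) ^ ((1:ℝ) - α))) with hR
  have hRpos : 0 < R := Real.rpow_pos_of_pos hp' _
  have hjbound : ∀ j, μ {ω | t < |Z j ω|} ≤ ENNReal.ofReal R + ENNReal.ofReal R := by
    intro j
    have hK0 : 0 < σ ^ 2 * c j := by
      have := (hvb j).1; positivity
    have hint : ∀ s : ℝ, Integrable (fun ω => Real.exp (s * Z j ω)) μ := by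
      intro s
      exact my_Z_int μ n (A j) e hmeas hindep v hv hgauss' s
    have hmgf : ∀ s : ℝ, mgf (Z j) μ s = Real.exp ((σ ^ 2 * c j) * s ^ 2 / 2) := by
      intro s
      have h := my_Z_mgf μ n (A j) e hmeas hindep v hv hgauss' s
      calc mgf (Z j) μ s = Real.exp ((v:ℝ) * (∑ i, (A j i) ^ 2) * s ^ 2 / 2) := h
        _ = Real.exp ((σ ^ 2 * c j) * s ^ 2 / 2) := rfl
    have htail := my_tail μ (Z j) (σ ^ 2 * c j) hK0 hint hmgf t ht0
    have hexp_le : Real.exp (-(t ^ 2 / (2 * (σ ^ 2 * c j)))) ≤ R := by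
      rw [hR, Real.rpow_def_of_pos hp']
      apply Real.exp_le_exp.mpr
      have hKle : σ ^ 2 * c j ≤ σ ^ 2 * (1 / ((n:ℝ) * lam)) :=
        mul_le_mul_of_nonneg_left (hvb j).2 (by positivity)
      have hstep1 : t ^ 2 / (2 * (σ ^ 2 * (1 / ((n:ℝ) * lam)))) ≤ t ^ 2 / (2 * (σ ^ 2 * c j)) := by
        gcongr
      have hstep2 : t ^ 2 / (2 * (σ ^ 2 * (1 / ((n:ℝ) * lam))))
          = 2 * (n:ℝ) ^ ((1:ℝ) - α) * Real.log p := by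
        rw [ht2, hnr]
        field_simp
        ring
      have : Real.log p * -(2 * (n:ℝ) ^ ((1:ℝ) - α)) = -(2 * (n:ℝ) ^ ((1:ℝ) - α) * Real.log p) := by
        ring
      rw [this]
      rw [← hstep2]
      exact neg_le_neg hstep1
    have hsub : {ω | t < |Z j ω|} ⊆ {ω | t ≤ Z j ω} ∪ {ω | Z j ω ≤ -t} := by
      intro ω hω
      have hω' : t < |Z j ω| := hω
      rcases lt_abs.mp hω' with h | h
      · exact Or.inl h.le
      · exact Or.inr (show Z j ω ≤ -t by linarith)
    calc μ {ω | t < |Z j ω|} ≤ μ ({ω | t ≤ Z j ω} ∪ {ω | Z j ω ≤ -t}) := measure_mono hsub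
      _ ≤ μ {ω | t ≤ Z j ω} + μ {ω | Z j ω ≤ -t} := measure_union_le _ _
      _ ≤ ENNReal.ofReal R + ENNReal.ofReal R := by
          exact add_le_add (htail.1.trans (ENNReal.ofReal_le_ofReal hexp_le))
            (htail.2.trans (ENNReal.ofReal_le_ofReal hexp_le))
  -- union bound
  set Gc : Set Ω := ⋃ j, {ω | t < |Z j ω|} with hGcdef
  have hGc_meas : MeasurableSet Gc :=
    MeasurableSet.iUnion fun j => measurableSet_lt measurable_const (hZmeas j).abs
  have hGc : μ Gc ≤ ENNReal.ofReal (2 * (p:ℝ) ^ ((1:ℝ) - 2 * (n:ℝ) ^ ((1:ℝ) - α))) := by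
    have h1 : μ Gc ≤ ∑ j : Fin p, μ {ω | t < |Z j ω|} := measure_iUnion_fintype_le μ _
    have h2 : ∑ j : Fin p, μ {ω | t < |Z j ω|}
        ≤ ∑ _j : Fin p, (ENNReal.ofReal R + ENNReal.ofReal R) :=
      Finset.sum_le_sum fun j _ => hjbound j
    have h3 : ∑ _j : Fin p, (ENNReal.ofReal R + ENNReal.ofReal R)
        = (p : ℝ≥0∞) * ENNReal.ofReal (2 * R) := by
      rw [Finset.sum_const, Finset.card_univ, Fintype.card_fin, nsmul_eq_mul]
      congr 1
      rw [← ENNReal.ofReal_add hRpos.le hRpos.le]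
      congr 1
      ring
    have h4 : (p : ℝ≥0∞) * ENNReal.ofReal (2 * R)
        = ENNReal.ofReal ((p:ℝ) * (2 * R)) := by
      rw [← ENNReal.ofReal_natCast p, ← ENNReal.ofReal_mul (by positivity)]
    have h5 : (p:ℝ) * (2 * R) = 2 * (p:ℝ) ^ ((1:ℝ) - 2 * (n:ℝ) ^ ((1:ℝ) - α)) := by
      rw [hR, show ((1:ℝ) - 2 * (n:ℝ) ^ ((1:ℝ) - α)) = 1 + -(2 * (n:ℝ) ^ ((1:ℝ) - α)) by ring,
        Real.rpow_add hp', Real.rpow_one]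
      ring
    calc μ Gc ≤ ∑ j : Fin p, μ {ω | t < |Z j ω|} := h1
      _ ≤ _ := h2
      _ = _ := h3
      _ = _ := h4
      _ = _ := by rw [h5]
  -- good event implies recovery
  have hsubGT : Gcᶜ ⊆ {ω | ∀ j, βstar j ≠ 0 → ∀ l, βstar l = 0 → |βhat ω l| < |βhat ω j|} := by
    intro ω hω
    simp only [hGcdef, Set.compl_iUnion, Set.mem_iInter, Set.mem_compl_iff, Set.mem_setOf_eq,
      not_lt] at hω
    intro j hj l hl
    have hbj := hbeta j hj
    have h2t : 4 * σ / Real.sqrt lam * Real.sqrt (Real.log p / (n:ℝ) ^ α) = 2 * t := by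
      rw [htdef]; ring
    rw [h2t] at hbj
    have hZj := hω j
    have hZl := hω l
    have hl' : βhat ω l = Z l ω := by rw [hβZ ω l, hl, zero_add]
    have habs : |βstar j| ≤ |βstar j + Z j ω| + |Z j ω| := by
      have := abs_add_le (βstar j + Z j ω) (-(Z j ω))
      simpa using this
    have hj' : t < |βhat ω j| := by
      rw [hβZ ω j]
      linarith
    rw [hl']
    exact lt_of_le_of_lt hZl hj'
  -- conclude
  calc 1 - ENNReal.ofReal (2 * (p : ℝ) ^ (1 - 2 * (n : ℝ) ^ (1 - α)))
      ≤ 1 - μ Gc := tsub_le_tsub_left hGc 1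
    _ = μ Gcᶜ := (prob_compl_eq_one_sub hGc_meas).symm
    _ ≤ _ := measure_mono hsubGT
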